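/- Let (s_j)_{j≥1} be a sequence of positive real numbers and let (g_j)_{j≥1} be a sequence of uniformly bounded continuous complex-valued functions on ℝ. Then the set W = { ν ∈ P(ℝ) : there exists a sequence of real numbers t_n → ∞ such that for every j ≥ 1, ξ_{s_j t_n} → g_j weakly in L²(ℝ, ν) } is a G_δ subset of P(ℝ). -/

import Mathlib

open MeasureTheory Filter Topology
open scoped ENNReal NNReal

/-- `ξ_s(x) = exp(2πisx)`. -/
noncomputable def xi (s x : ℝ) : ℂ := Complex.exp (2 * Real.pi * Complex.I * s * x)

/-- Weak convergence of a sequence to `g` in `L²(ℝ, ν)`. -/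
def WeakL2Tendsto (φ : ℕ → ℝ → ℂ) (g : ℝ → ℂ) (ν : Measure ℝ) : Prop :=
  ∀ f : ℝ → ℂ, MemLp f 2 ν →
    Tendsto (fun n => ∫ x, φ n x * (starRingEnd ℂ) (f x) ∂ν) atTop
      (𝓝 (∫ x, g x * (starRingEnd ℂ) (f x) ∂ν))

lemma xi_norm (s x : ℝ) : ‖xi s x‖ = 1 := by
  have h : (2 * ↑Real.pi * Complex.I * ↑s * ↑x : ℂ) = ((2 * Real.pi * s * x : ℝ) : ℂ) * Complex.I := by
    push_cast; ring
  rw [xi, h, Complex.norm_exp_ofReal_mul_I]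

lemma xi_continuous (s : ℝ) : Continuous (xi s) := by
  unfold xi
  exact Complex.continuous_exp.comp (continuous_const.mul Complex.continuous_ofReal)

lemma memL2_of_bounded' {μ : Measure ℝ} [IsFiniteMeasure μ] {φ : ℝ → ℂ} (hc : Continuous φ)
    {C : ℝ} (hb : ∀ x, ‖φ x‖ ≤ C) : MemLp φ 2 μ :=
  MemLp.of_bound hc.aestronglyMeasurable C (Filter.Eventually.of_forall hb)

lemma memL2_conj {μ : Measure ℝ} {h : ℝ → ℂ} (hh : MemLp h 2 μ) :
    MemLp (fun x => (starRingEnd ℂ) (h x)) 2 μ := by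
  refine ⟨continuous_star.comp_aestronglyMeasurable hh.1, ?_⟩
  have heq : eLpNorm (fun x => (starRingEnd ℂ) (h x)) 2 μ = eLpNorm h 2 μ := by
    apply eLpNorm_congr_nnnorm_ae
    exact Filter.Eventually.of_forall fun x => nnnorm_star (h x)
  rw [heq]; exact hh.2

lemma integrable_mul_conj {μ : Measure ℝ} {φ h : ℝ → ℂ} (hφ : MemLp φ 2 μ) (hh : MemLp h 2 μ) :
    Integrable (fun x => φ x * (starRingEnd ℂ) (h x)) μ := by
  have h2 : MemLp (fun x => (starRingEnd ℂ) (h x)) 2 μ := memL2_conj hh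
  have hmix := h2.smul (r := 1) hφ
  rw [memLp_one_iff_integrable] at hmix
  exact hmix

lemma norm_integral_mul_conj_le {μ : Measure ℝ} {φ h : ℝ → ℂ}
    (hφ : MemLp φ 2 μ) (hh : MemLp h 2 μ) :
    ‖∫ x, φ x * (starRingEnd ℂ) (h x) ∂μ‖ ≤
      (eLpNorm φ 2 μ).toReal * (eLpNorm h 2 μ).toReal := by
  have key : (∫ x, φ x * (starRingEnd ℂ) (h x) ∂μ)
      = @inner ℂ _ _ (hh.toLp h) (hφ.toLp φ) := by
    rw [MeasureTheory.L2.inner_def]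
    apply integral_congr_ae
    filter_upwards [hh.coeFn_toLp, hφ.coeFn_toLp] with x h1 h2
    rw [RCLike.inner_apply, h1, h2, mul_comm]
  rw [key]
  calc ‖@inner ℂ _ _ (hh.toLp h) (hφ.toLp φ)‖ ≤ ‖hh.toLp h‖ * ‖hφ.toLp φ‖ := norm_inner_le_norm _ _
    _ = (eLpNorm h 2 μ).toReal * (eLpNorm φ 2 μ).toReal := by
        rw [MeasureTheory.Lp.norm_toLp, MeasureTheory.Lp.norm_toLp]
    _ = _ := mul_comm _ _

lemma continuous_int {φ : ℝ → ℂ} (hc : Continuous φ) {C : ℝ} (hb : ∀ x, ‖φ x‖ ≤ C) :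
    Continuous fun ν : ProbabilityMeasure ℝ => ∫ x, φ x ∂ν.toMeasure := by
  have hre : Continuous fun x => RCLike.re (φ x) := RCLike.continuous_re.comp hc
  have him : Continuous fun x => RCLike.im (φ x) := RCLike.continuous_im.comp hc
  set Fre : BoundedContinuousFunction ℝ ℝ :=
    BoundedContinuousFunction.ofNormedAddCommGroup _ hre C
      (fun x => (RCLike.norm_re_le_norm (φ x)).trans (hb x)) with hFre
  set Fim : BoundedContinuousFunction ℝ ℝ :=
    BoundedContinuousFunction.ofNormedAddCommGroup _ him C
      (fun x => (RCLike.norm_im_le_norm (φ x)).trans (hb x)) with hFim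
  have hint : ∀ ν : ProbabilityMeasure ℝ, Integrable φ ν.toMeasure := fun ν => by
    rw [← memLp_one_iff_integrable]
    exact MemLp.of_bound hc.aestronglyMeasurable C (Filter.Eventually.of_forall hb)
  have key : (fun ν : ProbabilityMeasure ℝ => ∫ x, φ x ∂ν.toMeasure)
      = fun ν : ProbabilityMeasure ℝ =>
        ((∫ x, Fre x ∂ν.toMeasure : ℝ) : ℂ) + ((∫ x, Fim x ∂ν.toMeasure : ℝ) : ℂ) * Complex.I := by
    funext ν
    rw [← integral_re_add_im (hint ν)]
    rfl
  rw [key]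
  have h1 := ProbabilityMeasure.continuous_integral_boundedContinuousFunction (X := ℝ) Fre
  have h2 := ProbabilityMeasure.continuous_integral_boundedContinuousFunction (X := ℝ) Fim
  exact ((Complex.continuous_ofReal.comp h1).add
    ((Complex.continuous_ofReal.comp h2).mul continuous_const))

lemma exists_approx_family :
    ∃ E : ℕ → ℝ → ℂ,
      (∀ k, Continuous (E k)) ∧ (∀ k, HasCompactSupport (E k)) ∧
      ∀ (μ : Measure ℝ), IsProbabilityMeasure μ → ∀ (f : ℝ → ℂ), MemLp f 2 μ →
        ∀ δ : ℝ, 0 < δ → ∃ k, eLpNorm (fun x => f x - E k x) 2 μ ≤ ENNReal.ofReal δ := by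
  obtain ⟨S, hSc, hSd⟩ := TopologicalSpace.exists_countable_dense C(ℝ, ℂ)
  obtain ⟨d, hd⟩ := hSc.exists_eq_range hSd.nonempty
  set χ : ℕ → ℝ → ℝ := fun m x => max 0 (min 1 ((m + 1 : ℝ) - |x|)) with hχ
  have hχcont : ∀ m, Continuous (χ m) :=
    fun m => continuous_const.max (continuous_const.min (continuous_const.sub continuous_abs))
  have hχ0 : ∀ m x, 0 ≤ χ m x := fun m x => le_max_left _ _
  have hχ1 : ∀ m x, χ m x ≤ 1 := fun m x => max_le zero_le_one (min_le_left _ _)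
  have hχeq1 : ∀ (m : ℕ) (x : ℝ), |x| ≤ (m : ℝ) → χ m x = 1 := by
    intro m x hx
    have h1 : (1 : ℝ) ≤ (m + 1 : ℝ) - |x| := by linarith
    simp only [hχ]
    rw [min_eq_left h1, max_eq_right zero_le_one]
  have hχeq0 : ∀ (m : ℕ) (x : ℝ), ((m : ℝ) + 1) ≤ |x| → χ m x = 0 := by
    intro m x hx
    have h1 : (m + 1 : ℝ) - |x| ≤ 0 := by linarith
    simp only [hχ]
    rw [max_eq_left (le_trans (min_le_right _ _) h1)]
  set E : ℕ → ℝ → ℂ := fun k x => d k.unpair.1 x * ((χ k.unpair.2 x : ℝ) : ℂ) with hE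
  have hEc : ∀ k, Continuous (E k) := fun k =>
    ((d k.unpair.1).continuous.mul (Complex.continuous_ofReal.comp (hχcont k.unpair.2)))
  have hEs : ∀ k, HasCompactSupport (E k) := by
    intro k
    apply HasCompactSupport.intro (isCompact_Icc (a := -((k.unpair.2 : ℝ) + 1)) (b := (k.unpair.2 : ℝ) + 1))
    intro x hx
    have hxa : ((k.unpair.2 : ℝ) + 1) ≤ |x| := by
      by_contra h
      push_neg at h
      exact hx (Set.mem_Icc.mpr ⟨((abs_lt.mp h).1).le, ((abs_lt.mp h).2).le⟩)
    show d k.unpair.1 x * ((χ k.unpair.2 x : ℝ) : ℂ) = 0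
    rw [hχeq0 _ _ hxa]
    simp
  have unif : ∀ h : C(ℝ, ℂ), HasCompactSupport (⇑h) → ∀ ε : ℝ, 0 < ε →
      ∃ k, ∀ x, ‖E k x - h x‖ ≤ ε := by
    intro h hsupp ε hε
    obtain ⟨r, hr⟩ := hsupp.isBounded.subset_closedBall 0
    set m : ℕ := ⌈r⌉₊ with hm
    have hsub : tsupport (⇑h) ⊆ Set.Icc (-(m : ℝ)) m := by
      refine hr.trans ?_
      refine (Metric.closedBall_subset_closedBall (Nat.le_ceil r)).trans ?_
      rw [Real.closedBall_eq_Icc, zero_sub, zero_add]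
    set K : Set ℝ := Set.Icc (-((m : ℝ) + 1)) ((m : ℝ) + 1) with hK
    haveI : CompactSpace K := isCompact_iff_compactSpace.mp isCompact_Icc
    set ρ : C(ℝ, ℂ) → C(K, ℂ) := fun F => F.restrict K with hρ
    have hρc : Continuous ρ := ContinuousMap.continuous_restrict K
    have hVopen : IsOpen (ρ ⁻¹' Metric.ball (ρ h) ε) := Metric.isOpen_ball.preimage hρc
    have hhV : h ∈ ρ ⁻¹' Metric.ball (ρ h) ε := by
      simp [Metric.mem_ball, hε]
    obtain ⟨p, hpV, hpS⟩ := hSd.inter_open_nonempty _ hVopen ⟨h, hhV⟩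
    rw [hd] at hpS
    obtain ⟨n, hn⟩ := hpS
    refine ⟨Nat.pair n m, ?_⟩
    have hup : (Nat.pair n m).unpair = (n, m) := Nat.unpair_pair n m
    have hdist : ∀ y : K, dist (p y) (h y) < ε :=
      fun y => lt_of_le_of_lt (ContinuousMap.dist_apply_le_dist (f := ρ p) (g := ρ h) y) hpV
    intro x
    rcases le_or_gt (|x|) ((m : ℝ) + 1) with hx1 | hx2
    · have hxK : x ∈ K := Set.mem_Icc.mpr ⟨neg_le_of_abs_le hx1, le_of_abs_le hx1⟩
      have hdx : dist (p x) (h x) < ε := hdist ⟨x, hxK⟩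
      rcases le_or_gt (|x|) (m : ℝ) with hx0 | hx0
      · have hEeq : E (Nat.pair n m) x = p x := by
          simp only [hE, hup, hχeq1 _ _ hx0, hn]
          simp
        rw [hEeq, ← dist_eq_norm]
        exact hdx.le
      · have hh0 : h x = 0 := by
          apply image_eq_zero_of_notMem_tsupport
          intro hmem
          have hmm := hsub hmem
          rw [Set.mem_Icc] at hmm
          exact absurd (abs_le.mpr ⟨hmm.1, hmm.2⟩) (not_le.mpr hx0)
        rw [hh0, sub_zero]
        have hle : ‖E (Nat.pair n m) x‖ ≤ ‖p x‖ := by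
          simp only [hE, hup, hn, norm_mul, Complex.norm_real, Real.norm_eq_abs,
            abs_of_nonneg (hχ0 m x)]
          exact mul_le_of_le_one_right (norm_nonneg _) (hχ1 m x)
        refine hle.trans ?_
        calc ‖p x‖ = dist (p x) (h x) := by rw [hh0, dist_eq_norm, sub_zero]
          _ ≤ ε := hdx.le
    · have hh0 : h x = 0 := by
        apply image_eq_zero_of_notMem_tsupport
        intro hmem
        have hmm := hsub hmem
        rw [Set.mem_Icc] at hmm
        have habs : |x| ≤ (m : ℝ) := abs_le.mpr ⟨hmm.1, hmm.2⟩
        linarith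
      have hE0 : E (Nat.pair n m) x = 0 := by
        simp only [hE, hup, hχeq0 _ _ hx2.le]
        simp
      rw [hE0, hh0, sub_zero, norm_zero]
      exact hε.le
  refine ⟨E, hEc, hEs, ?_⟩
  intro μ hμ f hf δ hδ
  haveI := hμ
  obtain ⟨g0, hg0supp, hg0close, hg0cont, hg0mem⟩ :=
    hf.exists_hasCompactSupport_eLpNorm_sub_le (μ := μ) (p := 2) (by norm_num)
      (ε := ENNReal.ofReal (δ / 2)) (by simp [ENNReal.ofReal_eq_zero]; linarith)
  obtain ⟨k, hk⟩ := unif ⟨g0, hg0cont⟩ hg0supp (δ / 2) (by linarith)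
  refine ⟨k, ?_⟩
  have hEk2 : MemLp (E k) 2 μ := by
    obtain ⟨C, hC⟩ := (hEc k).bounded_above_of_compact_support (hEs k)
    exact memL2_of_bounded' (hEc k) hC
  have hbd : eLpNorm (fun x => g0 x - E k x) 2 μ ≤ ENNReal.ofReal (δ / 2) := by
    have hh := eLpNorm_le_of_ae_bound (μ := μ) (p := 2)
      (f := fun x => g0 x - E k x) (C := δ / 2)
      (Filter.Eventually.of_forall fun x => by
        rw [norm_sub_rev]; exact hk x)
    simpa using hh
  have hsplit : (fun x => f x - E k x) = (fun x => (f x - g0 x) + (g0 x - E k x)) := by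
    funext x; ring
  rw [hsplit]
  calc eLpNorm (fun x => (f x - g0 x) + (g0 x - E k x)) 2 μ
      ≤ eLpNorm (fun x => f x - g0 x) 2 μ + eLpNorm (fun x => g0 x - E k x) 2 μ :=
        eLpNorm_add_le ((hf.sub hg0mem).aestronglyMeasurable)
          ((hg0mem.sub hEk2).aestronglyMeasurable) one_le_two
    _ ≤ ENNReal.ofReal (δ / 2) + ENNReal.ofReal (δ / 2) := by
        refine add_le_add ?_ hbd
        have hfg : (fun x => f x - g0 x) = f - g0 := rfl
        rw [hfg]
        exact hg0close
    _ = ENNReal.ofReal δ := by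
        rw [← ENNReal.ofReal_add (by linarith) (by linarith)]
        norm_num

/-- Integral pairing. -/
noncomputable def intConj (φ ψ : ℝ → ℂ) (ν : ProbabilityMeasure ℝ) : ℂ :=
  ∫ x, φ x * (starRingEnd ℂ) (ψ x) ∂ν.toMeasure

/-- The open sets used in the Gδ description. -/
def USet (s : ℕ → ℝ) (g : ℕ → ℝ → ℂ) (E : ℕ → ℝ → ℂ) (N k : ℕ) :
    Set (ProbabilityMeasure ℝ) :=
  ⋃ (T : ℝ), ⋃ (_ : (N : ℝ) ≤ T), ⋂ (j : Fin (k + 1)), ⋂ (i : Fin (k + 1)),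
    {ν | ‖intConj (xi (s j * T)) (E i) ν - intConj (g j) (E i) ν‖ < 1 / ((k : ℝ) + 1)}

lemma mem_USet_iff {s : ℕ → ℝ} {g E : ℕ → ℝ → ℂ} {N k : ℕ} {ν : ProbabilityMeasure ℝ} :
    ν ∈ USet s g E N k ↔ ∃ T : ℝ, (N : ℝ) ≤ T ∧ ∀ (j i : Fin (k + 1)),
      ‖intConj (xi (s j * T)) (E i) ν - intConj (g j) (E i) ν‖ < 1 / ((k : ℝ) + 1) := by
  simp only [USet, Set.mem_iUnion, Set.mem_iInter, Set.mem_setOf_eq, exists_prop]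

theorem statement7 (s : ℕ → ℝ) (hs : ∀ j, 0 < s j)
    (g : ℕ → ℝ → ℂ) (hgc : ∀ j, Continuous (g j))
    (hgb : ∃ C : ℝ, ∀ j x, ‖g j x‖ ≤ C) :
    IsGδ {ν : ProbabilityMeasure ℝ |
        ∃ t : ℕ → ℝ, Tendsto t atTop atTop ∧
          ∀ j, WeakL2Tendsto (fun n x => xi (s j * t n) x) (g j) ν.toMeasure} := by
  classical
  obtain ⟨C, hC⟩ := hgb
  set C₀ : ℝ := max C 0 with hC₀def
  have hgB : ∀ j x, ‖g j x‖ ≤ C₀ := fun j x => (hC j x).trans (le_max_left _ _)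
  have hC₀0 : 0 ≤ C₀ := le_max_right _ _
  obtain ⟨E, hEc, hEs, hEdens⟩ := exists_approx_family
  choose CE hCE using fun i => (hEc i).bounded_above_of_compact_support (hEs i)
  have hE2 : ∀ (ν : ProbabilityMeasure ℝ) i, MemLp (E i) 2 ν.toMeasure :=
    fun ν i => memL2_of_bounded' (hEc i) (hCE i)
  have hset : {ν : ProbabilityMeasure ℝ |
      ∃ t : ℕ → ℝ, Tendsto t atTop atTop ∧
        ∀ j, WeakL2Tendsto (fun n x => xi (s j * t n) x) (g j) ν.toMeasure}
      = ⋂ (N : ℕ), ⋂ (k : ℕ), USet s g E N k := by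
    ext ν
    simp only [Set.mem_setOf_eq, Set.mem_iInter]
    constructor
    · rintro ⟨t, ht, hw⟩ N k
      rw [mem_USet_iff]
      have h0 : (0 : ℝ) < 1 / ((k : ℝ) + 1) := by positivity
      have hev1 : ∀ᶠ n in atTop, (N : ℝ) ≤ t n := ht.eventually_ge_atTop N
      have hev2 : ∀ᶠ n in atTop, ∀ (j i : Fin (k + 1)),
          ‖intConj (xi (s j * t n)) (E i) ν - intConj (g j) (E i) ν‖ < 1 / ((k : ℝ) + 1) := by
        rw [eventually_all]; intro j
        rw [eventually_all]; intro i
        have htd := hw j (E i) (hE2 ν i)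
        obtain ⟨N', hN'⟩ := Metric.tendsto_atTop.mp htd (1 / ((k : ℝ) + 1)) h0
        refine eventually_atTop.mpr ⟨N', fun n hn => ?_⟩
        have := hN' n hn
        rw [dist_eq_norm] at this
        exact this
      obtain ⟨n, hn1, hn2⟩ := (hev1.and hev2).exists
      exact ⟨t n, hn1, hn2⟩
    · intro hmem
      choose T hT1 hT2 using fun n => mem_USet_iff.mp (hmem n n)
      refine ⟨T, tendsto_atTop_mono hT1 tendsto_natCast_atTop_atTop, ?_⟩
      intro j f hf
      rw [Metric.tendsto_atTop]
      intro ε hε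
      set M : ℝ := C₀ + 1 with hMdef
      have hM1 : (1 : ℝ) ≤ M := by simp [hMdef]; linarith
      have hM0 : (0 : ℝ) < M := by linarith
      have hδ : 0 < ε / (4 * M) := by positivity
      obtain ⟨k, hk⟩ := hEdens ν.toMeasure inferInstance f hf (ε / (4 * M)) hδ
      have hEk2 := hE2 ν k
      have hfEk : MemLp (fun x => f x - E k x) 2 ν.toMeasure := hf.sub hEk2
      refine ⟨max (max j k) ⌈2 / ε⌉₊, fun n hn => ?_⟩
      have hjn : j ≤ n := le_trans (le_trans (le_max_left _ _) (le_max_left _ _)) hn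
      have hkn : k ≤ n := le_trans (le_trans (le_max_right _ _) (le_max_left _ _)) hn
      have hcn : ⌈2 / ε⌉₊ ≤ n := le_trans (le_max_right _ _) hn
      have hξ2 : MemLp (xi (s j * T n)) 2 ν.toMeasure :=
        memL2_of_bounded' (xi_continuous _) (fun x => le_of_eq (xi_norm _ x))
      have hg2 : MemLp (g j) 2 ν.toMeasure := memL2_of_bounded' (hgc j) (fun x => hgB j x)
      show dist (∫ x, xi (s j * T n) x * (starRingEnd ℂ) (f x) ∂ν.toMeasure)
        (∫ x, g j x * (starRingEnd ℂ) (f x) ∂ν.toMeasure) < ε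
      set A : ℂ := ∫ x, xi (s j * T n) x * (starRingEnd ℂ) (f x) ∂ν.toMeasure with hA
      set B : ℂ := ∫ x, g j x * (starRingEnd ℂ) (f x) ∂ν.toMeasure with hB
      set A' : ℂ := intConj (xi (s j * T n)) (E k) ν with hA'
      set B' : ℂ := intConj (g j) (E k) ν with hB'
      -- error term from the open set
      have h2 : ‖A' - B'‖ < 1 / ((n : ℝ) + 1) :=
        hT2 n ⟨j, Nat.lt_succ_of_le hjn⟩ ⟨k, Nat.lt_succ_of_le hkn⟩
      -- L² bounds
      have hsξ : (eLpNorm (xi (s j * T n)) 2 ν.toMeasure).toReal ≤ 1 := by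
        apply ENNReal.toReal_le_of_le_ofReal zero_le_one
        have hh := eLpNorm_le_of_ae_bound (μ := ν.toMeasure) (p := 2)
          (f := xi (s j * T n)) (C := 1)
          (Filter.Eventually.of_forall fun x => le_of_eq (xi_norm _ x))
        simpa using hh
      have hsg : (eLpNorm (g j) 2 ν.toMeasure).toReal ≤ M := by
        apply ENNReal.toReal_le_of_le_ofReal hM0.le
        have hh := eLpNorm_le_of_ae_bound (μ := ν.toMeasure) (p := 2)
          (f := g j) (C := M)
          (Filter.Eventually.of_forall fun x => (hgB j x).trans (by linarith))
        simpa using hh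
      have hsf : (eLpNorm (fun x => f x - E k x) 2 ν.toMeasure).toReal ≤ ε / (4 * M) :=
        ENNReal.toReal_le_of_le_ofReal hδ.le hk
      have hsf' : (eLpNorm (fun x => E k x - f x) 2 ν.toMeasure).toReal ≤ ε / (4 * M) := by
        have heq : eLpNorm (fun x => E k x - f x) 2 ν.toMeasure
            = eLpNorm (fun x => f x - E k x) 2 ν.toMeasure :=
          eLpNorm_congr_nnnorm_ae (Filter.Eventually.of_forall fun x => by rw [← neg_sub, nnnorm_neg])
        rw [heq]; exact hsf
      -- decomposition identities
      have hA1 : A - A' = ∫ x, xi (s j * T n) x * (starRingEnd ℂ) (f x - E k x) ∂ν.toMeasure := by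
        rw [hA, hA', intConj, ← integral_sub (integrable_mul_conj hξ2 hf)
          (integrable_mul_conj hξ2 hEk2)]
        congr 1; funext x; rw [map_sub, mul_sub]
      have hA3 : B' - B = ∫ x, g j x * (starRingEnd ℂ) (E k x - f x) ∂ν.toMeasure := by
        rw [hB, hB', intConj, ← integral_sub (integrable_mul_conj hg2 hEk2)
          (integrable_mul_conj hg2 hf)]
        congr 1; funext x; rw [map_sub, mul_sub]
      have h1 : ‖A - A'‖ ≤ ε / (4 * M) := by
        rw [hA1]
        refine (norm_integral_mul_conj_le hξ2 hfEk).trans ?_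
        calc (eLpNorm (xi (s j * T n)) 2 ν.toMeasure).toReal
              * (eLpNorm (fun x => f x - E k x) 2 ν.toMeasure).toReal
            ≤ 1 * (ε / (4 * M)) :=
              mul_le_mul hsξ hsf ENNReal.toReal_nonneg zero_le_one
          _ = ε / (4 * M) := one_mul _
      have h3 : ‖B' - B‖ ≤ M * (ε / (4 * M)) := by
        rw [hA3]
        refine (norm_integral_mul_conj_le hg2 ?_).trans ?_
        · exact hEk2.sub hf
        · exact mul_le_mul hsg hsf' ENNReal.toReal_nonneg hM0.le
      have hMe : M * (ε / (4 * M)) = ε / 4 := by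
        field_simp
      have hde : ε / (4 * M) ≤ ε / 4 := by
        apply div_le_div_of_nonneg_left hε.le (by norm_num) ?_
        · linarith
      have hsmall : 1 / ((n : ℝ) + 1) < ε / 2 := by
        have hcr : (2 / ε : ℝ) ≤ (⌈2 / ε⌉₊ : ℝ) := Nat.le_ceil _
        have hcn' : ((⌈2 / ε⌉₊ : ℕ) : ℝ) ≤ (n : ℝ) := Nat.cast_le.mpr hcn
        have hlt : 2 / ε < (n : ℝ) + 1 := by linarith
        have h2lt : 2 < ((n : ℝ) + 1) * ε := (div_lt_iff₀ hε).mp hlt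
        rw [div_lt_div_iff₀ (by positivity) two_pos]
        linarith
      have hdecomp : A - B = (A - A') + (A' - B') + (B' - B) := by ring
      rw [dist_eq_norm, hdecomp]
      refine lt_of_le_of_lt (norm_add₃_le) ?_
      have := hMe
      linarith
  rw [hset]
  refine IsGδ.iInter fun N => IsGδ.iInter fun k => IsOpen.isGδ ?_
  apply isOpen_iUnion; intro T
  apply isOpen_iUnion; intro _
  refine isOpen_iInter_of_finite fun j => isOpen_iInter_of_finite fun i => ?_
  have c1 : Continuous fun ν : ProbabilityMeasure ℝ =>
      ∫ x, xi (s ↑j * T) x * (starRingEnd ℂ) (E ↑i x) ∂ν.toMeasure := by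
    apply continuous_int ((xi_continuous _).mul (continuous_star.comp (hEc ↑i))) (C := CE ↑i)
    intro x
    show ‖xi (s ↑j * T) x * (starRingEnd ℂ) (E ↑i x)‖ ≤ CE ↑i
    rw [norm_mul, xi_norm, one_mul]
    calc ‖(starRingEnd ℂ) (E ↑i x)‖ = ‖E ↑i x‖ := norm_star _
      _ ≤ CE ↑i := hCE ↑i x
  have c2 : Continuous fun ν : ProbabilityMeasure ℝ =>
      ∫ x, g ↑j x * (starRingEnd ℂ) (E ↑i x) ∂ν.toMeasure := by
    apply continuous_int ((hgc ↑j).mul (continuous_star.comp (hEc ↑i))) (C := C₀ * CE ↑i)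
    intro x
    show ‖g ↑j x * (starRingEnd ℂ) (E ↑i x)‖ ≤ C₀ * CE ↑i
    rw [norm_mul]
    exact mul_le_mul (hgB ↑j x) (le_trans (le_of_eq (norm_star _)) (hCE ↑i x))
      (norm_nonneg _) hC₀0
  simp only [intConj]
  exact isOpen_lt (c1.sub c2).norm continuous_const
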